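/- arXiv:2006.03147 — 3 statements merged into one kernel-verified Lean document; each statement's English description precedes it below -/
import Mathlib

section
/- Let G be a finite group acting on a field K of characteristic p > 0 with finite imperfection degree. Then [K : K^G] = [K^p : (K^G)^p], and consequently [K : K^p] = [K^G : (K^G)^p], i.e. K and its fixed field K^G have the same imperfection degree. -/
/-- The subfield of `p`-th powers `K^p` of a field `K`. -/
def pPowSubfield (K : Type*) [Field K] (p : ℕ) : Subfield K :=
  Subfield.closure {x : K | ∃ y : K, y ^ p = x}

/-- The degree `[B : A]` of a subfield `B` of `K` over (the trace in `B` of) a subfield `A`. -/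
noncomputable def relDeg {K : Type*} [Field K] (A B : Subfield K) : ℕ :=
  Module.finrank (Subfield.comap B.subtype A) B

theorem relDeg_eq_relfinrank {K : Type*} [Field K] (A B : Subfield K) :
    relDeg A B = Subfield.relfinrank A B := by
  rw [relDeg, Subfield.finrank_comap, Subfield.fieldRange_subtype]

theorem pPowSubfield_eq_fieldRange (K : Type*) [Field K] (p : ℕ) [Fact p.Prime] [CharP K p] :
    pPowSubfield K p = (frobenius K p).fieldRange := by
  have hset : {x : K | ∃ y : K, y ^ p = x} = ↑(frobenius K p).fieldRange := by
    ext x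
    simp [RingHom.mem_fieldRange, frobenius_def, eq_comm]
  rw [pPowSubfield, hset, Subfield.closure_eq]

/-- Let `G` be a finite group acting on a field `K` of characteristic `p > 0` with finite
imperfection degree. Then `[K : K^G] = [K^p : (K^G)^p]` and consequently
`[K : K^p] = [K^G : (K^G)^p]`, i.e. `K` and its fixed field `K^G` have the same
imperfection degree. -/
theorem fixedField_same_imperfection_degree (p : ℕ) [Fact p.Prime] (K : Type*) [Field K]
    [CharP K p] [FiniteDimensional (pPowSubfield K p) K]
    (G : Type*) [Group G] [Finite G] [MulSemiringAction G K] :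
    Module.finrank (FixedPoints.subfield G K) K
      = relDeg (Subfield.closure {x : K | ∃ y ∈ FixedPoints.subfield G K, y ^ p = x})
          (pPowSubfield K p) ∧
    Module.finrank (pPowSubfield K p) K
      = Module.finrank (pPowSubfield (FixedPoints.subfield G K) p)
          (FixedPoints.subfield G K) := by
  set F : Subfield K := FixedPoints.subfield G K with hF
  set φ := frobenius K p with hφ
  -- the closure in the statement is the image of `F` under Frobenius
  have hA : Subfield.closure {x : K | ∃ y ∈ F, y ^ p = x} = F.map φ := by
    have hset : {x : K | ∃ y ∈ F, y ^ p = x} = ↑(F.map φ) := by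
      ext x
      simp [Subfield.mem_map, hφ, frobenius_def, eq_comm]
    rw [hset, Subfield.closure_eq]
  have hB : pPowSubfield K p = φ.fieldRange := pPowSubfield_eq_fieldRange K p
  -- Claim 1 : [K : F] = [K^p : F^p]
  have claim1 : Module.finrank F K
      = Subfield.relfinrank (F.map φ) (pPowSubfield K p) := by
    rw [hB, RingHom.fieldRange_eq_map, Subfield.relfinrank_map_map,
      Subfield.relfinrank_top_right]
  -- identify the intrinsic `pPowSubfield F p` with the comap of `F.map φ`
  have hComap : pPowSubfield (↥F) p = (F.map φ).comap F.subtype := by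
    have hset : {x : ↥F | ∃ y : ↥F, y ^ p = x} = ↑((F.map φ).comap F.subtype) := by
      ext x
      constructor
      · rintro ⟨y, rfl⟩
        exact ⟨(y : K), y.2, rfl⟩
      · rintro ⟨y, hy, h⟩
        exact ⟨⟨y, hy⟩, by ext; push_cast; exact h⟩
    rw [pPowSubfield, hset, Subfield.closure_eq]
  have hRHS : Module.finrank (pPowSubfield (↥F) p) (↥F)
      = Subfield.relfinrank (F.map φ) F := by
    rw [hComap, Subfield.finrank_comap, Subfield.fieldRange_subtype]
  -- towers
  have hle1 : F.map φ ≤ F := by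
    rintro x ⟨y, hy, rfl⟩
    exact pow_mem hy p
  have hle2 : F.map φ ≤ pPowSubfield K p := by
    rw [hB]
    rintro x ⟨y, hy, rfl⟩
    exact ⟨y, rfl⟩
  have t1 := Subfield.relfinrank_mul_finrank_top hle1
  have t2 := Subfield.relfinrank_mul_finrank_top hle2
  have hne : Module.finrank F K ≠ 0 := Module.finrank_pos.ne'
  refine ⟨by rw [claim1, relDeg_eq_relfinrank, hA], ?_⟩
  rw [hRHS]
  rw [← claim1] at t2
  have key : Module.finrank F K * Module.finrank (pPowSubfield K p) K
      = Module.finrank F K * Subfield.relfinrank (F.map φ) F := by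
    rw [t2, ← t1, mul_comm]
  exact Nat.eq_of_mul_eq_mul_left Module.finrank_pos key
end

section
/- There are no nontrivial actions of a finite group by field automorphisms on a separably closed field of positive characteristic: if K is separably closed with char(K) = p > 0 and σ is a field automorphism of K of finite order, then σ = id. -/
open Finset Polynomial

section
variable {K : Type*} [Field K]
variable {K : Type*} [Field K]
variable {K : Type*} [Field K]

private lemma shift_sum (q : ℕ) (g : ℕ → K) :
    ∑ i ∈ range q, g (i + 1) = ∑ i ∈ range q, g i - g 0 + g q := by
  have h1 := Finset.sum_range_succ' g q
  have h2 := Finset.sum_range_succ g q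
  linear_combination h2 - h1

private lemma exists_comb_ne_zero (σ : K ≃+* K) {q : ℕ} (hord : orderOf σ = q) (hq1 : 0 < q)
    (a : ℕ → K) (ha : ∀ i < q, a i ≠ 0) :
    ∃ θ : K, ∑ i ∈ range q, a i * (σ ^ i) θ ≠ 0 := by
  by_contra hc
  push_neg at hc
  set f : Fin q → (K →* K) := fun i => ((σ ^ (i : ℕ) : K ≃+* K) : K →+* K).toMonoidHom with hf
  have hinj : Function.Injective f := by
    intro i j hij
    have hfun : ∀ x, (σ ^ (i : ℕ)) x = (σ ^ (j : ℕ)) x := fun x => DFunLike.congr_fun hij x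
    have heq : (σ ^ (i : ℕ)) = (σ ^ (j : ℕ)) := RingEquiv.ext hfun
    have : ∀ {m n : ℕ}, m < q → n < q → m ≤ n → (σ ^ m) = (σ ^ n) → m = n := by
      intro m n hm hn hmn hpow
      by_contra hne
      have h1 : σ ^ (n - m) = 1 := by
        have := congrArg (fun e => (σ ^ m)⁻¹ * e) hpow
        simp only [inv_mul_cancel] at this
        rw [← pow_sub_mul_pow σ (Nat.le_of_lt (lt_of_le_of_ne hmn hne))] at this
        have h2 := congrArg (fun e => e * (σ ^ m)⁻¹) this.symm
        simpa [mul_assoc] using h2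
      have := orderOf_dvd_of_pow_eq_one h1
      rw [hord] at this
      have hlt : n - m < q := lt_of_le_of_lt (Nat.sub_le _ _) hn
      have hpos : 0 < n - m := Nat.sub_pos_of_lt (lt_of_le_of_ne hmn hne)
      exact absurd (Nat.le_of_dvd hpos this) (not_le.mpr hlt)
    rcases le_total (i : ℕ) (j : ℕ) with hle | hle
    · exact Fin.ext (this i.isLt j.isLt hle heq)
    · exact (Fin.ext (this j.isLt i.isLt hle heq.symm)).symm
  have li : LinearIndependent K (fun i : Fin q => (f i : K → K)) :=
    (linearIndependent_monoidHom K K).comp f hinj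
  have hzero : ∑ i : Fin q, a (i : ℕ) • (f i : K → K) = 0 := by
    funext x
    have := hc x
    rw [← Fin.sum_univ_eq_sum_range (fun i => a i * (σ ^ i) x) q] at this
    simp only [Finset.sum_apply, Pi.smul_apply, smul_eq_mul, Pi.zero_apply]
    exact this
  have h0 := Fintype.linearIndependent_iff.mp li (fun i => a (i : ℕ)) hzero ⟨0, hq1⟩
  exact ha 0 hq1 h0

private lemma eq_natCast_of_pow_char (p : ℕ) [CharP K p] (hp : p.Prime) {x : K}
    (hx : x ^ p = x) : ∃ k : ℕ, x = (k : K) := by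
  classical
  haveI := Fact.mk hp
  set F : K[X] := X ^ p - X with hF
  have hdegX : (X : K[X]).degree < (X ^ p : K[X]).degree := by
    rw [degree_X_pow, degree_X]
    exact_mod_cast hp.one_lt
  have hdeg : F.degree = p := by
    rw [hF, degree_sub_eq_left_of_degree_lt hdegX, degree_X_pow]
  have hF0 : F ≠ 0 := by
    intro h
    rw [h, degree_zero] at hdeg
    simp at hdeg
  have hnat : F.natDegree = p := natDegree_eq_of_degree_eq_some hdeg
  have hroot : ∀ k : ℕ, k < p → IsRoot F ((k : K)) := by
    intro k _
    have : ((k : K)) ^ p = (k : K) := by have h := map_natCast (frobenius K p) k; rwa [frobenius_def] at h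
    simp [hF, IsRoot, this]
  set S : Finset K := (range p).image (fun k : ℕ => (k : K)) with hS
  have hcardS : S.card = p := by
    rw [hS, Finset.card_image_of_injOn, card_range]
    intro a ha b hb hab
    exact CharP.natCast_injOn_Iio K p (by simpa using ha) (by simpa using hb) hab
  have hsub : S ⊆ F.roots.toFinset := by
    intro y hy
    rw [hS, Finset.mem_image] at hy
    obtain ⟨k, hk, rfl⟩ := hy
    rw [Multiset.mem_toFinset, mem_roots hF0]
    exact hroot k (by simpa using hk)
  have hcard_le : F.roots.toFinset.card ≤ p := by
    calc F.roots.toFinset.card ≤ Multiset.card F.roots := F.roots.toFinset_card_le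
    _ ≤ F.natDegree := F.card_roots'
    _ = p := hnat
  have hSeq : S = F.roots.toFinset := Finset.eq_of_subset_of_card_le hsub (by omega)
  have hxroot : x ∈ F.roots.toFinset := by
    rw [Multiset.mem_toFinset, mem_roots hF0]
    simp [hF, IsRoot, hx]
  rw [← hSeq, hS, Finset.mem_image] at hxroot
  obtain ⟨k, _, hk⟩ := hxroot
  exact ⟨k, hk.symm⟩

private lemma no_aut_charCase (K : Type*) [Field K] (q : ℕ) (hq : q.Prime) [CharP K q]
    [IsSepClosed K] (σ : K ≃+* K) (hord : orderOf σ = q)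
    (hcomb : ∀ (a : ℕ → K), (∀ i < q, a i ≠ 0) →
      ∃ θ : K, ∑ i ∈ range q, a i * (σ ^ i) θ ≠ 0) : False := by
  haveI := Fact.mk hq
  have hσq : σ ^ q = 1 := by rw [← hord]; exact pow_orderOf_eq_one σ
  have hqapp : ∀ x : K, (σ ^ q) x = x := by rw [hσq]; intro x; rfl
  set T : K → K := fun x => ∑ i ∈ range q, (σ ^ i) x with hT
  have happ : ∀ (i : ℕ) (x : K), (σ ^ (i + 1)) x = σ ((σ ^ i) x) := by
    intro i x; rw [pow_succ']; rfl
  have hone : ∀ x : K, (1 : K ≃+* K) x = x := fun _ => rfl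
  have hTσ : ∀ x : K, T (σ x) = T x := by
    intro x
    have h1 : T (σ x) = ∑ i ∈ range q, (σ ^ (i + 1)) x := by
      apply Finset.sum_congr rfl
      intro i _
      rw [pow_succ]; rfl
    rw [h1, shift_sum q (fun i => (σ ^ i) x)]
    simp [hqapp, hone, -RingAut.coe_pow]; rfl
  have hσT : ∀ x : K, σ (T x) = T x := by
    intro x
    have h1 : σ (T x) = ∑ i ∈ range q, (σ ^ (i + 1)) x := by
      rw [hT]
      simp only [map_sum]
      exact Finset.sum_congr rfl fun i _ => (happ i x).symm
    rw [h1, shift_sum q (fun i => (σ ^ i) x)]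
    simp [hqapp, hone, -RingAut.coe_pow]; rfl
  have hfix : ∀ x : K, σ x = x → ∀ i : ℕ, (σ ^ i) x = x := by
    intro x hx i
    induction i with
    | zero => rfl
    | succ n ih => rw [happ, ih, hx]
  have hTsub : ∀ x y : K, T (x - y) = T x - T y := by
    intro x y
    simp [hT, map_sub, Finset.sum_sub_distrib]
  -- get an element of trace 1
  obtain ⟨θ₀, hθ₀⟩ := hcomb (fun _ => 1) (fun _ _ => one_ne_zero)
  have ht : T θ₀ ≠ 0 := by simpa [hT] using hθ₀
  set t := T θ₀ with htdef
  have hσt : σ t = t := hσT θ₀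
  set w := θ₀ * t⁻¹ with hw
  have hTw : T w = 1 := by
    have h1 : ∀ i ∈ range q, (σ ^ i) w = (σ ^ i) θ₀ * t⁻¹ := by
      intro i _
      rw [hw, map_mul, map_inv₀, hfix t hσt i]
    show (∑ i ∈ range q, (σ ^ i) w) = 1
    rw [Finset.sum_congr rfl h1, ← Finset.sum_mul]
    exact mul_inv_cancel₀ ht
  set u := w ^ q - w with hu
  have hTu : T u = 0 := by
    have h1 : T (w ^ q) = (T w) ^ q := by
      show (∑ i ∈ range q, (σ ^ i) (w ^ q)) = (∑ i ∈ range q, (σ ^ i) w) ^ q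
      rw [sum_pow_char]
      exact Finset.sum_congr rfl fun i _ => map_pow _ _ _
    rw [hu, hTsub, h1, hTw, one_pow, sub_self]
  set s : ℕ → K := fun i => ∑ j ∈ range i, (σ ^ j) u with hs
  have hσs : ∀ i : ℕ, σ (s i) = s (i + 1) - u := by
    intro i
    have h1 : σ (s i) = ∑ j ∈ range i, (σ ^ (j + 1)) u := by
      show σ (∑ j ∈ range i, (σ ^ j) u) = _
      rw [map_sum]
      exact Finset.sum_congr rfl fun j _ => (happ j u).symm
    have h2 : s (i + 1) = (∑ j ∈ range i, (σ ^ (j + 1)) u) + u := by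
      show (∑ j ∈ range (i + 1), (σ ^ j) u) = _
      simpa using Finset.sum_range_succ' (fun j => (σ ^ j) u) i
    rw [h1, h2]; ring
  set c := ∑ i ∈ range q, s i * (σ ^ i) w with hc
  have hσc : σ c = c - u := by
    have h1 : σ c = ∑ i ∈ range q, (s (i + 1) - u) * (σ ^ (i + 1)) w := by
      show σ (∑ i ∈ range q, s i * (σ ^ i) w) = _
      rw [map_sum]
      simp only [map_mul]
      exact Finset.sum_congr rfl fun i _ => by rw [hσs i, happ i w]
    have h2 : ∑ i ∈ range q, s (i + 1) * (σ ^ (i + 1)) w = c := by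
      rw [shift_sum q (fun k => s k * (σ ^ k) w)]
      have hs0 : s 0 = 0 := by show (∑ j ∈ range 0, (σ ^ j) u) = 0; simp
      have hsq : s q = 0 := hTu
      rw [hs0, hsq, ← hc]; ring
    have h3 : ∑ i ∈ range q, (σ ^ (i + 1)) w = 1 := by
      rw [shift_sum q (fun k => (σ ^ k) w), hqapp]
      have h0 : (σ ^ 0) w = w := rfl
      have hTw' : (∑ i ∈ range q, (σ ^ i) w) = 1 := hTw
      rw [h0]
      linear_combination hTw'
    calc σ c = ∑ i ∈ range q, (s (i + 1) * (σ ^ (i + 1)) w - u * (σ ^ (i + 1)) w) := by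
            rw [h1]; exact Finset.sum_congr rfl fun i _ => by ring
    _ = (∑ i ∈ range q, s (i + 1) * (σ ^ (i + 1)) w) - u * ∑ i ∈ range q, (σ ^ (i + 1)) w := by
            rw [Finset.sum_sub_distrib, Finset.mul_sum]
    _ = c - u := by rw [h2, h3, mul_one]
  -- Artin-Schreier root
  set G : K[X] := X ^ q - X - C (-c) with hG
  have hder : G.derivative = -1 := by
    rw [hG]
    simp [derivative_X_pow, CharP.cast_eq_zero K q]
  have hsep : G.Separable := by
    rw [Polynomial.Separable, hder]
    exact (isCoprime_one_right).neg_right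
  have hdegG : G.degree = q := by
    have h1 : ((X : K[X]) + C (-c)).degree < ((X : K[X]) ^ q).degree := by
      rw [degree_X_pow]
      calc ((X : K[X]) + C (-c)).degree ≤ 1 := le_of_eq (degree_X_add_C _)
      _ < (q : WithBot ℕ) := by exact_mod_cast hq.one_lt
    have h2 : G = X ^ q - (X + C (-c)) := by rw [hG]; ring
    rw [h2, degree_sub_eq_left_of_degree_lt h1, degree_X_pow]
  obtain ⟨γ, hγ⟩ := IsSepClosed.exists_root G (by rw [hdegG]; exact_mod_cast hq.ne_zero) hsep
  have hγ' : γ ^ q - γ = -c := by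
    have := hγ
    rw [IsRoot, hG] at this
    simp only [eval_sub, eval_pow, eval_X, eval_C] at this
    linear_combination this
  set d := σ γ - γ - w with hd
  have hdq : d ^ q = d := by
    have e1 : d ^ q = σ (γ ^ q) - γ ^ q - w ^ q := by
      rw [hd, sub_pow_char, sub_pow_char, map_pow]
    have e2 : γ ^ q = γ - c := by linear_combination hγ'
    rw [e1, e2, map_sub]
    rw [hd]
    linear_combination -hσc - hu
  have hTd1 : T d = -1 := by
    rw [hd, hTsub, hTsub, hTσ, hTw]; ring
  obtain ⟨k, hk⟩ := eq_natCast_of_pow_char q hq hdq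
  have hTd2 : T d = 0 := by
    rw [hk]
    show (∑ i ∈ range q, (σ ^ i) ((k : K))) = 0
    have : ∀ i ∈ range q, (σ ^ i) ((k : K)) = (k : K) := fun i _ => map_natCast _ _
    rw [Finset.sum_congr rfl this, Finset.sum_const, card_range, nsmul_eq_mul,
      CharP.cast_eq_zero K q, zero_mul]
  rw [hTd1] at hTd2
  exact one_ne_zero (neg_eq_zero.mp hTd2)

variable {K : Type*} [Field K]

private lemma shift_sum' (q : ℕ) (g : ℕ → K) :
    ∑ i ∈ range q, g (i + 1) = ∑ i ∈ range q, g i - g 0 + g q := by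
  have h1 := Finset.sum_range_succ' g q
  have h2 := Finset.sum_range_succ g q
  linear_combination h2 - h1

private lemma shift_prod' (q : ℕ) (g : ℕ → K) :
    (∏ i ∈ range q, g (i + 1)) * g 0 = (∏ i ∈ range q, g i) * g q := by
  have h1 := Finset.prod_range_succ' g q
  have h2 := Finset.prod_range_succ g q
  rw [← h1, ← h2]

private lemma no_aut_otherCase (K : Type*) [Field K] (p q : ℕ) (hp : p ≠ 0) [CharP K p]
    [IsSepClosed K] (σ : K ≃+* K) (hq : q.Prime) (hqp : q ≠ p) (hord : orderOf σ = q)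
    (hcomb : ∀ (a : ℕ → K), (∀ i < q, a i ≠ 0) →
      ∃ θ : K, ∑ i ∈ range q, a i * (σ ^ i) θ ≠ 0) : False := by
  haveI := Fact.mk hq
  haveI : NeZero q := ⟨hq.ne_zero⟩
  have hσq : σ ^ q = 1 := by rw [← hord]; exact pow_orderOf_eq_one σ
  have hqapp : ∀ x : K, (σ ^ q) x = x := by rw [hσq]; intro x; rfl
  have hone1 : ∀ x : K, (1 : K ≃+* K) x = x := fun _ => rfl
  have happ : ∀ (i : ℕ) (x : K), (σ ^ (i + 1)) x = σ ((σ ^ i) x) := by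
    intro i x; rw [pow_succ']; rfl
  have happ' : ∀ (i : ℕ) (x : K), (σ ^ (i + 1)) x = (σ ^ i) (σ x) := by
    intro i x; rw [pow_succ]; rfl
  have hfix : ∀ x : K, σ x = x → ∀ i : ℕ, (σ ^ i) x = x := by
    intro x hx i
    induction i with
    | zero => rfl
    | succ n ih => rw [happ, ih, hx]
  have hinj0 : ∀ (i : ℕ) (x : K), (σ ^ i) x = 0 → x = 0 := by
    intro i x hx
    exact (σ ^ i).injective (hx.trans (map_zero (σ ^ i)).symm)
  have hqK : (q : K) ≠ 0 := by
    intro h0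
    rcases (Nat.Prime.eq_one_or_self_of_dvd hq p ((CharP.cast_eq_zero_iff K p q).mp h0))
      with h1 | h1
    · exact CharP.char_ne_one K p h1
    · exact hqp h1.symm
  haveI : NeZero (q : K) := ⟨hqK⟩
  -- a primitive q-th root of unity
  set g : K[X] := ∑ i ∈ range q, (X : K[X]) ^ i with hg
  have hgmul : g * (X - 1) = X ^ q - 1 := geom_sum_mul X q
  have hsepbig : ((X : K[X]) ^ q - 1).Separable := by
    have := separable_X_pow_sub_C (1 : K) hqK one_ne_zero
    rwa [map_one] at this
  have hgsep : g.Separable := Polynomial.Separable.of_mul_left (by rwa [hgmul])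
  have hgdeg : g.degree ≠ 0 := by
    have hcoeff : g.coeff (q - 1) = 1 := by
      rw [hg, finset_sum_coeff]
      simp only [coeff_X_pow]
      rw [Finset.sum_ite_eq (range q) (q - 1) (fun _ => (1 : K))]
      simp [Finset.mem_range, Nat.sub_lt hq.pos one_pos]
    have hle : ((q - 1 : ℕ) : WithBot ℕ) ≤ g.degree :=
      le_degree_of_ne_zero (by rw [hcoeff]; exact one_ne_zero)
    intro h0
    rw [h0] at hle
    have h2 : q - 1 = 0 := by exact_mod_cast le_antisymm hle (by exact_mod_cast Nat.zero_le _)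
    have := hq.two_le
    omega
  obtain ⟨z, hzroot⟩ := IsSepClosed.exists_root g hgdeg hgsep
  have hzq : z ^ q = 1 := by
    have h1 := congrArg (eval z) hgmul
    rw [eval_mul, eval_sub, eval_sub, eval_pow, eval_X, eval_one] at h1
    rw [hzroot] at h1
    · linear_combination -h1
  have hz1 : z ≠ 1 := by
    intro h1
    have h2 : eval z g = (q : K) := by
      rw [h1, hg]
      simp [eval_finset_sum]
    exact hqK (by rw [← h2]; exact hzroot)
  have hz0 : z ≠ 0 := by
    intro h0
    rw [h0, zero_pow hq.ne_zero] at hzq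
    exact zero_ne_one hzq
  have hordz : orderOf z = q := orderOf_eq_prime hzq hz1
  have hζ : IsPrimitiveRoot z q :=
    ⟨hzq, fun l hl => hordz ▸ orderOf_dvd_of_pow_eq_one hl⟩
  -- σ fixes z
  have hσz : σ z = z := by
    have hzσq : (σ z) ^ q = 1 := by rw [← map_pow, hzq, map_one]
    obtain ⟨k, hkq, hkz⟩ := hζ.eq_pow_of_pow_eq_one hzσq
    have hk0 : k ≠ 0 := by
      intro h0
      rw [h0, pow_zero] at hkz
      exact hz1 (σ.injective (by rw [← hkz, map_one]))
    have hpowz : ∀ j : ℕ, (σ ^ j) z = z ^ (k ^ j) := by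
      intro j
      induction j with
      | zero => simp [hone1]
      | succ n ih =>
        rw [happ' n z, ← hkz]
        rw [map_pow]  -- (σ^n) (z^k) = ((σ^n) z)^k
        rw [ih, ← pow_mul, ← pow_succ]
    have hkey : z ^ (k ^ q) = z := by rw [← hpowz q, hqapp]
    have hone : z ^ (k ^ q - 1) = 1 := by
      have h1 : z ^ (k ^ q - 1) * z = z := by
        rw [← pow_succ, Nat.sub_add_cancel (Nat.one_le_iff_ne_zero.mpr (pow_ne_zero q hk0))]
        exact hkey
      exact mul_right_cancel₀ hz0 (h1.trans (one_mul z).symm)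
    have hdvd : q ∣ k ^ q - 1 := hζ.dvd_of_pow_eq_one _ hone
    have hk1 : k = 1 := by
      have hz1' : ((k ^ q - 1 : ℕ) : ZMod q) = 0 := (ZMod.natCast_eq_zero_iff _ _).mpr hdvd
      rw [Nat.cast_sub (Nat.one_le_iff_ne_zero.mpr (pow_ne_zero q hk0)), Nat.cast_pow,
        Nat.cast_one, ZMod.pow_card] at hz1'
      have hcast : (k : ZMod q) = 1 := by linear_combination hz1'
      have := congrArg ZMod.val hcast
      rwa [ZMod.val_cast_of_lt hkq, ZMod.val_one q] at this
    rw [← hkz, hk1, pow_one]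
  by_cases hq2 : q = 2
  · -- q = 2
    subst hq2
    have h2K : (2 : K) ≠ 0 := by exact_mod_cast hqK
    have happ2 : ∀ x : K, σ (σ x) = x := by
      intro x
      have h1 := hqapp x
      rw [pow_two] at h1
      exact h1
    obtain ⟨ι, hι⟩ := IsSepClosed.exists_pow_nat_eq (-1 : K) 2
    have hι0 : ι ≠ 0 := by
      intro h0
      rw [h0] at hι
      norm_num at hι
    have hι2 : (σ ι) ^ 2 = ι ^ 2 := by
      rw [← map_pow, hι, map_neg, map_one]
    have hcases : σ ι = ι ∨ σ ι = -ι := by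
      have h1 : (σ ι - ι) * (σ ι + ι) = 0 := by linear_combination hι2
      rcases mul_eq_zero.mp h1 with h | h
      · left; exact sub_eq_zero.mp h
      · right; exact eq_neg_of_add_eq_zero_left h
    rcases hcases with hσι | hσι
    · -- σ ι = ι : Kummer-type contradiction
      have hσne : ∃ θ : K, σ θ ≠ θ := by
        by_contra hall
        push_neg at hall
        have h1 : σ = 1 := RingEquiv.ext fun x => hall x
        rw [h1, orderOf_one] at hord
        exact absurd hord (by norm_num)
      obtain ⟨θ, hθ⟩ := hσne
      set b := θ - σ θ with hb
      have hb0 : b ≠ 0 := sub_ne_zero.mpr (Ne.symm hθ)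
      have hσb : σ b = -b := by rw [hb, map_sub, happ2]; ring
      obtain ⟨β, hβ⟩ := IsSepClosed.exists_pow_nat_eq b 2
      have hβ0 : β ≠ 0 := fun h0 => hb0 (by rw [← hβ, h0, zero_pow two_ne_zero])
      set e := β * σ β with he
      have he0 : e ≠ 0 := mul_ne_zero hβ0 (fun h0 => hβ0 (by
        have h1 := congrArg σ h0
        rw [happ2, map_zero] at h1
        exact h1))
      have hσe : σ e = e := by rw [he, map_mul, happ2, mul_comm]
      have he2 : e ^ 2 = -(b ^ 2) := by
        have h1 : (σ β) ^ 2 = -b := by rw [← map_pow, hβ, hσb]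
        rw [he, mul_pow, hβ, h1]
        ring
      have hcases2 : e = ι * b ∨ e = -(ι * b) := by
        have h1 : (e - ι * b) * (e + ι * b) = 0 := by linear_combination he2 - b ^ 2 * hι
        rcases mul_eq_zero.mp h1 with h | h
        · left; exact sub_eq_zero.mp h
        · right; exact eq_neg_of_add_eq_zero_left h
      have hσe' : σ e = -e := by
        rcases hcases2 with h | h
        · rw [h, map_mul, hσι, hσb]; ring
        · rw [h, map_neg, map_mul, hσι, hσb]; ring
      rw [hσe] at hσe'
      have h2 : (2 : K) * e = 0 := by linear_combination hσe'
      rcases mul_eq_zero.mp h2 with h | h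
      · exact h2K h
      · exact he0 h
    · -- σ ι = -ι : sums of squares
      have hsq2 : ∀ x y : K, σ x = x → σ y = y → ∃ t : K, σ t = t ∧ t ^ 2 = x ^ 2 + y ^ 2 := by
        intro x y hx hy
        by_cases hxy : x + ι * y = 0
        · refine ⟨0, map_zero σ, ?_⟩
          have hx' : x = -(ι * y) := eq_neg_of_add_eq_zero_left hxy
          rw [hx']
          linear_combination (-(y ^ 2)) * hι
        · obtain ⟨v, hv⟩ := IsSepClosed.exists_pow_nat_eq (x + ι * y) 2
          refine ⟨v * σ v, by rw [map_mul, happ2, mul_comm], ?_⟩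
          have h1 : (σ v) ^ 2 = x - ι * y := by
            rw [← map_pow, hv, map_add, map_mul, hσι, hx, hy]
            ring
          rw [mul_pow, hv, h1]
          linear_combination (-(y ^ 2)) * hι
      have hnat : ∀ n : ℕ, ∃ t : K, σ t = t ∧ t ^ 2 = (n : K) := by
        intro n
        induction n with
        | zero => exact ⟨0, map_zero σ, by simp⟩
        | succ m ih =>
          obtain ⟨t, ht1, ht2⟩ := ih
          obtain ⟨t', ht'1, ht'2⟩ := hsq2 t 1 ht1 (map_one σ)
          refine ⟨t', ht'1, ?_⟩
          rw [ht'2, ht2]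
          push_cast
          ring
      obtain ⟨t, ht1, ht2⟩ := hnat (p - 1)
      have hp1 : ((p - 1 : ℕ) : K) = -1 := by
        have h1 : (p : K) = 0 := CharP.cast_eq_zero K p
        rw [Nat.cast_sub (Nat.one_le_iff_ne_zero.mpr hp), h1, Nat.cast_one]
        ring
      rw [hp1] at ht2
      have hcases3 : t = ι ∨ t = -ι := by
        have h1 : (t - ι) * (t + ι) = 0 := by linear_combination ht2 - hι
        rcases mul_eq_zero.mp h1 with h | h
        · left; exact sub_eq_zero.mp h
        · right; exact eq_neg_of_add_eq_zero_left h
      have hcontra : ι = -ι := by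
        rcases hcases3 with h | h
        · rw [h, hσι] at ht1
          exact ht1.symm
        · rw [h, map_neg, hσι, neg_neg] at ht1
          exact ht1
      have h2 : (2 : K) * ι = 0 := by linear_combination hcontra
      rcases mul_eq_zero.mp h2 with h | h
      · exact h2K h
      · exact hι0 h
  · -- q odd
    have hodd : Odd q := hq.odd_of_ne_two hq2
    set η := z⁻¹ with hη
    have hη0 : η ≠ 0 := inv_ne_zero hz0
    have hηq : η ^ q = 1 := by rw [hη, inv_pow, hzq, inv_one]
    have hzη : z * η = 1 := mul_inv_cancel₀ hz0
    have hση : σ η = η := by rw [hη, map_inv₀, hσz]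
    obtain ⟨θ, hθ⟩ := hcomb (fun i => η ^ i) (fun i _ => pow_ne_zero i hη0)
    set c := ∑ i ∈ range q, η ^ i * (σ ^ i) θ with hc
    have hc0 : c ≠ 0 := hθ
    have hσc : σ c = z * c := by
      have h1 : σ c = ∑ i ∈ range q, z * (η ^ (i + 1) * (σ ^ (i + 1)) θ) := by
        show σ (∑ i ∈ range q, η ^ i * (σ ^ i) θ) = _
        rw [map_sum]
        refine Finset.sum_congr rfl fun i _ => ?_
        rw [map_mul, map_pow, hση, ← happ i θ]
        have hzi : z * η ^ (i + 1) = η ^ i := by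
          rw [pow_succ]
          calc z * (η ^ i * η) = (z * η) * η ^ i := by ring
          _ = η ^ i := by rw [hzη, one_mul]
        rw [← hzi]
        ring
      rw [h1, ← Finset.mul_sum]
      congr 1
      rw [shift_sum' q (fun i => η ^ i * (σ ^ i) θ), ← hc]
      rw [pow_zero, pow_zero, hone1, hqapp, hηq]
      ring
    have hpowc : ∀ i : ℕ, (σ ^ i) c = z ^ i * c := by
      intro i
      induction i with
      | zero => simp [hone1]
      | succ n ih =>
        rw [happ' n c, hσc, map_mul, hfix z hσz n, ih]
        ring
    obtain ⟨β, hβ⟩ := IsSepClosed.exists_pow_nat_eq c q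
    have hβ0 : β ≠ 0 := fun h0 => hc0 (by rw [← hβ, h0, zero_pow hq.ne_zero])
    set e := ∏ i ∈ range q, (σ ^ i) β with he
    have he0 : e ≠ 0 := Finset.prod_ne_zero_iff.mpr fun i _ => fun h0 => hβ0 (hinj0 i β h0)
    have hβ0eq : (σ ^ 0) β = β := by rw [pow_zero]; exact hone1 β
    have hσe : σ e = e := by
      have h1 : σ e = ∏ i ∈ range q, (σ ^ (i + 1)) β := by
        show σ (∏ i ∈ range q, (σ ^ i) β) = _
        rw [map_prod]
        exact Finset.prod_congr rfl fun i _ => (happ i β).symm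
      have h3 : σ e * β = e * β := by
        rw [h1]
        calc (∏ i ∈ range q, (σ ^ (i + 1)) β) * β
            = (∏ i ∈ range q, (σ ^ (i + 1)) β) * ((σ ^ 0) β) := by rw [hβ0eq]
          _ = (∏ i ∈ range q, (σ ^ i) β) * ((σ ^ q) β) := shift_prod' q (fun i => (σ ^ i) β)
          _ = e * β := by rw [hqapp, ← he]
      exact mul_right_cancel₀ hβ0 h3
    have heq : e ^ q = c ^ q := by
      have h1 : e ^ q = ∏ i ∈ range q, (σ ^ i) c := by
        rw [he, ← Finset.prod_pow]
        exact Finset.prod_congr rfl fun i _ => by rw [← map_pow, hβ]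
      have h2 : (∏ i ∈ range q, (σ ^ i) c) = (z ^ (∑ i ∈ range q, i)) * c ^ q := by
        rw [Finset.prod_congr rfl (fun i _ => hpowc i), Finset.prod_mul_distrib,
          Finset.prod_pow_eq_pow_sum, Finset.prod_const, card_range]
      have h3 : z ^ (∑ i ∈ range q, i) = 1 := by
        obtain ⟨m, hm⟩ := Nat.Odd.sub_odd hodd odd_one
        have h4 : (∑ i ∈ range q, i) = q * m := by
          have h5 := Finset.sum_range_id_mul_two q
          rw [hm] at h5
          have h6 : q * (m + m) = q * m * 2 := by ring
          rw [h6] at h5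
          exact Nat.eq_of_mul_eq_mul_right two_pos h5
        rw [h4, pow_mul, hzq, one_pow]
      rw [h1, h2, h3, one_mul]
    have hcq : (e * c⁻¹) ^ q = 1 := by
      rw [mul_pow, heq, inv_pow, mul_inv_cancel₀ (pow_ne_zero q hc0)]
    obtain ⟨j, hjq, hjz⟩ := hζ.eq_pow_of_pow_eq_one hcq
    have hec : e = z ^ j * c := by
      field_simp at hjz
      linear_combination -hjz
    have hfinal : z ^ j * (z * c) = z ^ j * c := by
      calc z ^ j * (z * c) = z ^ j * σ c := by rw [hσc]
      _ = σ (z ^ j) * σ c := by rw [map_pow, hσz]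
      _ = σ e := by rw [← map_mul, ← hec]
      _ = e := hσe
      _ = z ^ j * c := hec
    have hzc : z * c = c := mul_left_cancel₀ (pow_ne_zero j hz0) hfinal
    exact hz1 (mul_right_cancel₀ hc0 (hzc.trans (one_mul c).symm))



private lemma no_prime_order_aut (K : Type*) [Field K] (p : ℕ) (hp : p ≠ 0) [CharP K p]
    [IsSepClosed K] (σ : K ≃+* K) (q : ℕ) (hq : q.Prime) (hord : orderOf σ = q) : False := by
  have hcomb : ∀ (a : ℕ → K), (∀ i < q, a i ≠ 0) →
      ∃ θ : K, ∑ i ∈ range q, a i * (σ ^ i) θ ≠ 0 :=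
    fun a ha => exists_comb_ne_zero σ hord hq.pos a ha
  by_cases hqp : q = p
  · subst hqp
    haveI : CharP K q := inferInstance
    exact no_aut_charCase K q hq σ hord hcomb
  · exact no_aut_otherCase K p q hp σ hq hqp hord hcomb

end

/-- Artin–Schreier consequence: there are no nontrivial finite-order field automorphisms
of a separably closed field of positive characteristic. -/
theorem finiteOrder_automorphism_of_sepClosed_eq_id (K : Type*) [Field K] (p : ℕ)
    (hp : p ≠ 0) [CharP K p] [IsSepClosed K] (σ : K ≃+* K) (n : ℕ) (hn : 0 < n)
    (h : σ ^ n = 1) : σ = RingEquiv.refl K := by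
  by_contra hne
  have hσ1 : σ ≠ 1 := hne
  have hdvd : orderOf σ ∣ n := orderOf_dvd_of_pow_eq_one h
  have hord0 : orderOf σ ≠ 0 := by
    intro h0
    rw [h0] at hdvd
    exact hn.ne' (zero_dvd_iff.mp hdvd)
  have hord1 : orderOf σ ≠ 1 := fun h1 => hσ1 (orderOf_eq_one_iff.mp h1)
  set m := orderOf σ with hm
  have hqprime : m.minFac.Prime := Nat.minFac_prime hord1
  have hqdvd : m.minFac ∣ m := Nat.minFac_dvd m
  have hτ : orderOf (σ ^ (m / m.minFac)) = m.minFac := by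
    have hdiv0 : m / m.minFac ≠ 0 :=
      Nat.div_ne_zero_iff_of_dvd hqdvd |>.mpr ⟨hord0, hqprime.ne_zero⟩
    rw [orderOf_pow' σ hdiv0, ← hm, Nat.gcd_eq_right (Nat.div_dvd_of_dvd hqdvd),
      Nat.div_div_self hqdvd hord0]
  exact no_prime_order_aut K p hp (σ ^ (m / m.minFac)) m.minFac hqprime hτ
end

section
/- Let K ⊆ L be a field extension of characteristic p > 0, and suppose K carries derivations D_1, …, D_e with ∩_i ker(D_i) = K^p, and these derivations extend to L. If the constants condition holds (the common kernel of the D_i in K equals K^p), then the extension K ⊆ L is separable (i.e. L is linearly disjoint from K^{1/p} over K). -/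
/-- The kernel of a derivation on a field, as a subfield (the field of constants). -/
def derivationKer (k : Type*) {K : Type*} [CommRing k] [Field K] [Algebra k K]
    (d : Derivation k K K) : Subfield K where
  carrier := {x | d x = 0}
  zero_mem' := by simp
  one_mem' := by simp
  add_mem' := by
    intro a b ha hb
    simp only [Set.mem_setOf_eq] at *
    simp [ha, hb]
  neg_mem' := by
    intro a ha
    simp only [Set.mem_setOf_eq] at *
    simp [ha]
  mul_mem' := by
    intro a b ha hb
    simp only [Set.mem_setOf_eq] at *
    rw [Derivation.leibniz]
    simp [ha, hb]
  inv_mem' := by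
    intro a ha
    simp only [Set.mem_setOf_eq] at *
    rcases eq_or_ne a 0 with rfl | h0
    · simp
    · have h := d.leibniz a a⁻¹
      rw [mul_inv_cancel₀ h0, Derivation.map_one_eq_zero, ha] at h
      have : a • d a⁻¹ = 0 := by simpa using h.symm
      rcases smul_eq_zero.mp this with h1 | h1
      · exact absurd h1 h0
      · exact h1

section Aux

open Matrix

variable {p e : ℕ} {K L : Type*} [Field K] [Field L]

/-- Iterated application of a family of derivations along a word. -/
def derWord (D : Fin e → Derivation ℤ K K) : List (Fin e) → K → K
  | [], x => x
  | i :: w, x => D i (derWord D w x)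

lemma derWord_nil (D : Fin e → Derivation ℤ K K) (x : K) : derWord D [] x = x := rfl

lemma derWord_cons (D : Fin e → Derivation ℤ K K) (i : Fin e) (w : List (Fin e)) (x : K) :
    derWord D (i :: w) x = D i (derWord D w x) := rfl

lemma derivation_pPow_eq_zero [CharP K p] (d : Derivation ℤ K K) {x : K}
    (hx : x ∈ pPowSubfield K p) : d x = 0 := by
  have h : pPowSubfield K p ≤ derivationKer ℤ d := by
    rw [pPowSubfield, Subfield.closure_le]
    rintro _ ⟨y, rfl⟩
    show d (y ^ p) = 0
    rw [Derivation.leibniz_pow, nsmul_eq_mul, CharP.cast_eq_zero K p, zero_mul]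
  exact h hx

lemma derWord_zero (D : Fin e → Derivation ℤ K K) (w : List (Fin e)) :
    derWord D w 0 = 0 := by
  induction w with
  | nil => rfl
  | cons i w ih => rw [derWord_cons, ih, map_zero]

lemma derWord_sum_mul [CharP K p] (D : Fin e → Derivation ℤ K K) (w : List (Fin e))
    {n : ℕ} (g v : Fin n → K) (hg : ∀ j, g j ∈ pPowSubfield K p) :
    derWord D w (∑ j, g j * v j) = ∑ j, g j * derWord D w (v j) := by
  induction w with
  | nil => rfl
  | cons i w ih =>
    rw [derWord_cons, ih, map_sum]
    refine Finset.sum_congr rfl fun j _ => ?_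
    rw [derWord_cons, Derivation.leibniz, derivation_pPow_eq_zero (D i) (hg j)]
    simp [smul_eq_mul]

lemma derWord_algebraMap [Algebra K L] (D : Fin e → Derivation ℤ K K)
    (D' : Fin e → Derivation ℤ L L)
    (hext : ∀ i (x : K), D' i (algebraMap K L x) = algebraMap K L (D i x))
    (w : List (Fin e)) (x : K) :
    derWord D' w (algebraMap K L x) = algebraMap K L (derWord D w x) := by
  induction w with
  | nil => rfl
  | cons i w ih => rw [derWord_cons, ih, hext, derWord_cons]

lemma exists_word_det_ne_zero (D : Fin e → Derivation ℤ K K)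
    (hker : (⨅ i, derivationKer ℤ (D i)) = pPowSubfield K p) :
    ∀ (n : ℕ) (a : Fin n → K), LinearIndependent (pPowSubfield K p) a →
      ∃ θ : Fin n → List (Fin e), (Matrix.of fun i j => derWord D (θ i) (a j)).det ≠ 0 := by
  intro n
  induction n with
  | zero =>
    intro a _
    exact ⟨fun _ => [], by simp [Matrix.det_isEmpty]⟩
  | succ n ih =>
    intro a ha
    obtain ⟨θ, hθ⟩ := ih (fun i => a i.castSucc)
      (ha.comp Fin.castSucc (Fin.castSucc_injective n))
    set M : Matrix (Fin n) (Fin n) K :=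
      Matrix.of (fun i j => derWord D (θ i) (a j.castSucc)) with hMdef
    have hθ' : M.det ≠ 0 := hθ
    set c : Fin n → K := M⁻¹ *ᵥ (fun i => derWord D (θ i) (a (Fin.last n))) with hc
    have hMc : M *ᵥ c = fun i => derWord D (θ i) (a (Fin.last n)) := by
      rw [hc, Matrix.mulVec_mulVec, Matrix.mul_nonsing_inv _ (isUnit_iff_ne_zero.mpr hθ'), Matrix.one_mulVec]
    by_cases hex : ∃ w : List (Fin e),
        derWord D w (a (Fin.last n)) ≠ ∑ j, derWord D w (a j.castSucc) * c j
    · obtain ⟨w, hw⟩ := hex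
      refine ⟨Fin.lastCases w θ, fun hdet => ?_⟩
      obtain ⟨v, hv0, hv⟩ := Matrix.exists_mulVec_eq_zero_iff.mpr hdet
      have key1 : (fun j => v j.castSucc + v (Fin.last n) * c j) = 0 := by
        apply Matrix.eq_zero_of_mulVec_eq_zero hθ'
        funext i
        have h0 := congrFun hv i.castSucc
        simp only [Matrix.mulVec, dotProduct, Matrix.of_apply, Fin.sum_univ_castSucc,
          Fin.lastCases_castSucc, Pi.zero_apply] at h0
        have h1 := congrFun hMc i
        simp only [Matrix.mulVec, dotProduct] at h1 ⊢
        have hsplit : ∑ j, M i j * (v j.castSucc + v (Fin.last n) * c j)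
            = ∑ j, M i j * v j.castSucc + v (Fin.last n) * ∑ j, M i j * c j := by
          rw [Finset.mul_sum, ← Finset.sum_add_distrib]
          exact Finset.sum_congr rfl fun j _ => by ring
        rw [Pi.zero_apply, hsplit, h1]
        rw [mul_comm (v (Fin.last n))]
        exact h0
      have h3 : ∀ j : Fin n, v j.castSucc = -(v (Fin.last n) * c j) := by
        intro j
        have := congrFun key1 j
        simp only [Pi.zero_apply] at this
        linear_combination this
      have h2 := congrFun hv (Fin.last n)
      simp only [Matrix.mulVec, dotProduct, Matrix.of_apply, Fin.sum_univ_castSucc,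
        Fin.lastCases_castSucc, Fin.lastCases_last, Pi.zero_apply] at h2
      simp only [h3] at h2
      have hsum : ∑ j, derWord D w (a j.castSucc) * -(v (Fin.last n) * c j)
          = -(v (Fin.last n) * ∑ j, derWord D w (a j.castSucc) * c j) := by
        rw [Finset.mul_sum, ← Finset.sum_neg_distrib]
        exact Finset.sum_congr rfl fun j _ => by ring
      rw [hsum] at h2
      have hfac : v (Fin.last n) *
          (derWord D w (a (Fin.last n)) - ∑ j, derWord D w (a j.castSucc) * c j) = 0 := by
        linear_combination h2
      rcases mul_eq_zero.mp hfac with h | h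
      · apply hv0
        funext j
        show v j = 0
        refine Fin.lastCases ?_ (fun i => ?_) j
        · exact h
        · rw [h3 i, h]; ring
      · exact hw (sub_eq_zero.mp h)
    · push_neg at hex
      exfalso
      have hsum0 : ∀ (i₀ : Fin e) (w : List (Fin e)),
          ∑ j, derWord D w (a j.castSucc) * D i₀ (c j) = 0 := by
        intro i₀ w
        have h1 := hex (i₀ :: w)
        simp only [derWord_cons] at h1
        have h2 := congrArg (D i₀) (hex w)
        rw [map_sum] at h2
        simp only [Derivation.leibniz, smul_eq_mul] at h2
        rw [Finset.sum_add_distrib] at h2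
        have hcomm : ∑ j, c j * D i₀ (derWord D w (a j.castSucc))
            = ∑ j, D i₀ (derWord D w (a j.castSucc)) * c j :=
          Finset.sum_congr rfl fun j _ => mul_comm _ _
        have hcomm2 : ∑ j, derWord D w (a j.castSucc) * D i₀ (c j)
            = ∑ j, D i₀ (c j) * derWord D w (a j.castSucc) :=
          Finset.sum_congr rfl fun j _ => mul_comm _ _
        rw [hcomm, ← h1] at h2
        linear_combination -h2
      have hDc : ∀ (i₀ : Fin e) (j : Fin n), D i₀ (c j) = 0 := by
        intro i₀
        have : (fun j => D i₀ (c j)) = 0 := by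
          apply Matrix.eq_zero_of_mulVec_eq_zero hθ'
          funext i
          simp only [Matrix.mulVec, dotProduct, Pi.zero_apply]
          exact hsum0 i₀ (θ i)
        intro j
        exact congrFun this j
      have hcp : ∀ j, c j ∈ pPowSubfield K p := by
        intro j
        rw [← hker, Subfield.mem_iInf]
        intro i₀
        exact hDc i₀ j
      refine ha.notMem_span_image (x := Fin.last n) (s := {Fin.last n}ᶜ) (by simp) ?_
      have h0 := hex []
      simp only [derWord_nil] at h0
      rw [h0]
      refine Submodule.sum_mem _ fun j _ => ?_
      rw [mul_comm]
      have : c j * a j.castSucc = (⟨c j, hcp j⟩ : pPowSubfield K p) • a j.castSucc := rfl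
      rw [this]
      exact Submodule.smul_mem _ _ (Submodule.subset_span
        ⟨j.castSucc, by simp [(Fin.castSucc_lt_last j).ne], rfl⟩)

end Aux

section Main
open Matrix

/-- Let `K ⊆ L` be a field extension of characteristic `p > 0` and suppose `K` carries
derivations `D₁, …, D_e` with `⋂ ker Dᵢ = K^p` which extend to derivations of `L`. Then
the extension `K ⊆ L` is separable, i.e. `L` is linearly disjoint from `K^{1/p}` over `K`;
equivalently (MacLane's criterion), every family of elements of `K` that is linearly
independent over `K^p` remains linearly independent over `L^p` in `L`. -/
theorem separable_of_derivations_extend (p e : ℕ) [Fact p.Prime]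
    (K L : Type*) [Field K] [Field L] [Algebra K L] [CharP K p] [CharP L p]
    (D : Fin e → Derivation ℤ K K) (D' : Fin e → Derivation ℤ L L)
    (hext : ∀ i (x : K), D' i (algebraMap K L x) = algebraMap K L (D i x))
    (hker : (⨅ i, derivationKer ℤ (D i)) = pPowSubfield K p) :
    ∀ (n : ℕ) (a : Fin n → K), LinearIndependent (pPowSubfield K p) a →
      LinearIndependent (pPowSubfield L p) (fun i => algebraMap K L (a i)) := by
  intro n a ha
  obtain ⟨θ, hθ⟩ := exists_word_det_ne_zero D hker n a ha
  rw [Fintype.linearIndependent_iff]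
  intro g hg i
  have hgL : ∑ j, (g j : L) * algebraMap K L (a j) = 0 := by
    rw [← hg]
    exact Finset.sum_congr rfl fun j _ => rfl
  have hrow : ∀ i', ∑ j, (g j : L) * algebraMap K L (derWord D (θ i') (a j)) = 0 := by
    intro i'
    have h := congrArg (derWord D' (θ i')) hgL
    rw [derWord_sum_mul (p := p) D' (θ i') _ _ (fun j => (g j).2), derWord_zero] at h
    simpa [derWord_algebraMap D D' hext] using h
  have hvec : (Matrix.of fun i' j => algebraMap K L (derWord D (θ i') (a j))) *ᵥ
      (fun j => (g j : L)) = 0 := by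
    funext i'
    simpa [Matrix.mulVec, dotProduct, mul_comm] using hrow i'
  have hdet : (Matrix.of fun i' j => algebraMap K L (derWord D (θ i') (a j))).det ≠ 0 := by
    have heq : (Matrix.of fun i' j => algebraMap K L (derWord D (θ i') (a j)))
        = (Matrix.of fun i' j => derWord D (θ i') (a j)).map (algebraMap K L) := rfl
    rw [heq]
    have hmd := ((algebraMap K L).map_det (Matrix.of fun i' j => derWord D (θ i') (a j))).symm
    intro h
    rw [show ((Matrix.of fun i' j => derWord D (θ i') (a j)).map (algebraMap K L)) = (algebraMap K L).mapMatrix (Matrix.of fun i' j => derWord D (θ i') (a j)) from rfl, ← RingHom.map_det] at h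
    exact hθ ((algebraMap K L).injective (by simpa using h))
  have := Matrix.eq_zero_of_mulVec_eq_zero hdet hvec
  exact Subtype.ext (congrFun this i)

end Main
end
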